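/- Let 1 ≤ q < p ≤ ∞ and ν ∈ ℕ. Then the entropy numbers of the identity operator from l_p^ν to l_q^ν satisfy e_k(I_ν : l_p^ν → l_q^ν) ≍ 2^{-k/ν} ν^{1/q - 1/p} for all k ∈ ℕ, with implied constants depending only on p and q. -/

import Mathlib

open scoped ENNReal

/-- The `k`-th entropy number of a bounded linear operator `T : X → Y`. -/
noncomputable def entropyNumber {X Y : Type*} [NormedAddCommGroup X] [NormedSpace ℝ X]
    [NormedAddCommGroup Y] [NormedSpace ℝ Y] (k : ℕ) (T : X →L[ℝ] Y) : ℝ :=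
  sInf {ε : ℝ | 0 < ε ∧ ∃ c : Fin (2 ^ (k - 1)) → Y,
    ∀ x : X, ‖x‖ ≤ 1 → ∃ i, ‖T x - c i‖ ≤ ε}

/-- The identity operator `I_ν : l_p^ν → l_q^ν` on `ℝ^ν`. -/
noncomputable def idLp (p q : ℝ≥0∞) [Fact (1 ≤ p)] [Fact (1 ≤ q)] (ν : ℕ) :
    PiLp p (fun _ : Fin ν => ℝ) →L[ℝ] PiLp q (fun _ : Fin ν => ℝ) :=
  LinearMap.toContinuousLinearMap
    ((WithLp.linearEquiv q ℝ (Fin ν → ℝ)).symm.toLinearMap.comp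
      (WithLp.linearEquiv p ℝ (Fin ν → ℝ)).toLinearMap)

open Real MeasureTheory Pointwise

noncomputable def nrm (t : ℝ≥0∞) [Fact (1 ≤ t)] {ν : ℕ} (x : Fin ν → ℝ) : ℝ :=
  ‖(WithLp.equiv t (Fin ν → ℝ)).symm x‖

variable {ν : ℕ} (t : ℝ≥0∞) [Fact (1 ≤ t)]

lemma nrm_add_le (x y : Fin ν → ℝ) : nrm t (x + y) ≤ nrm t x + nrm t y :=
  norm_add_le ((WithLp.equiv t (Fin ν → ℝ)).symm x) ((WithLp.equiv t (Fin ν → ℝ)).symm y)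

lemma nrm_smul (r : ℝ) (x : Fin ν → ℝ) : nrm t (r • x) = |r| * nrm t x := by
  simpa [nrm, Real.norm_eq_abs] using norm_smul r ((WithLp.equiv t (Fin ν → ℝ)).symm x)

lemma nrm_neg (x : Fin ν → ℝ) : nrm t (-x) = nrm t x :=
  norm_neg ((WithLp.equiv t (Fin ν → ℝ)).symm x)

lemma nrm_nonneg (x : Fin ν → ℝ) : 0 ≤ nrm t x := norm_nonneg _

lemma nrm_cont : Continuous (fun x : Fin ν → ℝ => nrm t x) :=
  (PiLp.continuous_toLp (p := t) (β := fun _ : Fin ν => ℝ)).norm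


lemma nrm_eq_sum (h : t ≠ ∞) (x : Fin ν → ℝ) :
    nrm t x = (∑ i, |x i| ^ t.toReal) ^ (1 / t.toReal) := by
  have h1 : (1:ℝ≥0∞) ≤ t := Fact.out
  have : 0 < t.toReal := ENNReal.toReal_pos (by rintro rfl; simp at h1) h
  simpa [nrm, Real.norm_eq_abs] using PiLp.norm_eq_sum this ((WithLp.equiv t (Fin ν → ℝ)).symm x)

lemma nrm_top_eq (x : Fin ν → ℝ) : nrm ∞ x = ⨆ i, |x i| := by
  unfold nrm
  rw [PiLp.norm_eq_ciSup]
  simp [Real.norm_eq_abs]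

lemma toReal_pos_of_ne_top (h : t ≠ ∞) : 0 < t.toReal := by
  have h1 : (1:ℝ≥0∞) ≤ t := Fact.out
  exact ENNReal.toReal_pos (by rintro rfl; simp at h1) h

lemma one_le_toReal_of_ne_top (h : t ≠ ∞) : 1 ≤ t.toReal := by
  have h1 : (1:ℝ≥0∞) ≤ t := Fact.out
  rw [show (1:ℝ) = (1:ℝ≥0∞).toReal by simp]
  exact ENNReal.toReal_mono h h1

lemma inv_toReal_eq (h : t ≠ ∞) : (t⁻¹).toReal = 1 / t.toReal := by
  rw [ENNReal.toReal_inv, one_div]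

lemma sum_rpow_compare {ar br : ℝ} (ha : 0 < ar) (hab : ar < br) (x : Fin ν → ℝ) :
    (∑ i, |x i| ^ ar) ^ (1 / ar)
      ≤ (ν : ℝ) ^ (1 / ar - 1 / br) * (∑ i, |x i| ^ br) ^ (1 / br) := by
  have hb : 0 < br := ha.trans hab
  set P := br / ar with hPdef
  have hP : 1 < P := (one_lt_div ha).2 hab
  have hcj : P.HolderConjugate P.conjExponent := Real.HolderConjugate.conjExponent hP
  have key := Real.inner_le_Lp_mul_Lq_of_nonneg (s := Finset.univ) hcj
    (f := fun i => |x i| ^ ar) (g := fun _ => (1:ℝ))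
    (fun i _ => Real.rpow_nonneg (abs_nonneg _) _) (fun i _ => zero_le_one)
  have hxP : ∀ i : Fin ν, (|x i| ^ ar) ^ P = |x i| ^ br := by
    intro i
    rw [← Real.rpow_mul (abs_nonneg _)]
    congr 1
    rw [hPdef]
    field_simp
  simp only [mul_one, Real.one_rpow, Finset.sum_const, Finset.card_univ, Fintype.card_fin,
    nsmul_eq_mul, hxP] at key
  have hA : (0:ℝ) ≤ ∑ i, |x i| ^ br := Finset.sum_nonneg fun i _ => Real.rpow_nonneg (abs_nonneg _) _
  have h2 : (∑ i, |x i| ^ ar) ^ (1 / ar)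
      ≤ (((∑ i, |x i| ^ br) ^ (1 / P)) * ((ν:ℝ) * 1) ^ (1 / P.conjExponent)) ^ (1 / ar) := by
    apply Real.rpow_le_rpow (Finset.sum_nonneg fun i _ => Real.rpow_nonneg (abs_nonneg _) _)
      (le_of_le_of_eq key (by ring_nf)) (by positivity)
  refine h2.trans (le_of_eq ?_)
  rw [mul_one, Real.mul_rpow (Real.rpow_nonneg hA _) (Real.rpow_nonneg (Nat.cast_nonneg _) _),
    ← Real.rpow_mul hA, ← Real.rpow_mul (Nat.cast_nonneg _)]
  have e1 : 1 / P * (1 / ar) = 1 / br := by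
    rw [hPdef]
    field_simp
  have e2 : 1 / P.conjExponent * (1 / ar) = 1 / ar - 1 / br := by
    have h1Q : 1 / P.conjExponent = 1 - 1 / P := by
      have := hcj.inv_add_inv_eq_one
      rw [one_div, one_div]
      linarith [hcj.inv_add_inv_eq_one]
    have hp' : 1 / P = ar / br := by rw [hPdef, one_div_div]
    rw [h1Q, hp', sub_mul, one_mul, div_mul_div_comm, mul_one, mul_comm br ar,
      div_mul_cancel_left₀ ha.ne', one_div br]
  rw [e1, e2, mul_comm]

lemma nrm_compare (a b : ℝ≥0∞) [Fact (1 ≤ a)] [Fact (1 ≤ b)] (hν : 1 ≤ ν) (ha : a ≠ ∞)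
    (hab : a ≤ b) (x : Fin ν → ℝ) :
    nrm a x ≤ (ν : ℝ) ^ ((a⁻¹).toReal - (b⁻¹).toReal) * nrm b x := by
  have har : 0 < a.toReal := toReal_pos_of_ne_top a ha
  rcases eq_or_lt_of_le hab with rfl | hlt
  · simp only [sub_self, Real.rpow_zero, one_mul, le_refl]
  rcases eq_or_ne b ∞ with rfl | hb
  · rw [nrm_eq_sum a ha, nrm_top_eq]
    have hbdd : BddAbove (Set.range fun j => |x j|) := Set.Finite.bddAbove (Set.finite_range _)
    have hM : ∀ i, |x i| ≤ ⨆ j, |x j| := fun i => le_ciSup hbdd i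
    have hM0 : 0 ≤ ⨆ j, |x j| := le_trans (abs_nonneg (x ⟨0, hν⟩)) (hM ⟨0, hν⟩)
    have hsum : ∑ i, |x i| ^ a.toReal ≤ (ν : ℝ) * (⨆ j, |x j|) ^ a.toReal := by
      have := Finset.sum_le_card_nsmul Finset.univ (fun i => |x i| ^ a.toReal)
        ((⨆ j, |x j|) ^ a.toReal)
        (fun i _ => Real.rpow_le_rpow (abs_nonneg _) (hM i) har.le)
      simpa [Finset.card_univ, nsmul_eq_mul] using this
    calc (∑ i, |x i| ^ a.toReal) ^ (1 / a.toReal)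
        ≤ ((ν : ℝ) * (⨆ j, |x j|) ^ a.toReal) ^ (1 / a.toReal) :=
          Real.rpow_le_rpow (Finset.sum_nonneg fun i _ => Real.rpow_nonneg (abs_nonneg _) _)
            hsum (by positivity)
      _ = (ν : ℝ) ^ ((a⁻¹).toReal - (⊤ : ℝ≥0∞)⁻¹.toReal) * (⨆ j, |x j|) := by
          rw [Real.mul_rpow (Nat.cast_nonneg _) (Real.rpow_nonneg hM0 _),
            ← Real.rpow_mul hM0, mul_one_div, div_self har.ne', Real.rpow_one]
          simp [inv_toReal_eq a ha]
  · have hbr : 0 < b.toReal := toReal_pos_of_ne_top b hb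
    have habr : a.toReal < b.toReal := ENNReal.toReal_strict_mono hb hlt
    rw [nrm_eq_sum a ha, nrm_eq_sum b hb, inv_toReal_eq a ha, inv_toReal_eq b hb]
    exact sum_rpow_compare har habr x

lemma nrm_le_of_coords (hν : 1 ≤ ν) {s : ℝ} (hs : 0 ≤ s) (x : Fin ν → ℝ)
    (h : ∀ i, |x i| ≤ s) : nrm t x ≤ (ν : ℝ) ^ (t⁻¹).toReal * s := by
  haveI : Nonempty (Fin ν) := ⟨⟨0, hν⟩⟩
  rcases eq_or_ne t ∞ with rfl | ht
  · rw [nrm_top_eq]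
    simpa using ciSup_le h
  · have htr : 0 < t.toReal := toReal_pos_of_ne_top t ht
    rw [nrm_eq_sum t ht, inv_toReal_eq t ht]
    have hsum : ∑ i, |x i| ^ t.toReal ≤ (ν : ℝ) * s ^ t.toReal := by
      have := Finset.sum_le_card_nsmul Finset.univ (fun i => |x i| ^ t.toReal) (s ^ t.toReal)
        (fun i _ => Real.rpow_le_rpow (abs_nonneg _) (h i) htr.le)
      simpa [Finset.card_univ, nsmul_eq_mul] using this
    calc (∑ i, |x i| ^ t.toReal) ^ (1 / t.toReal)
        ≤ ((ν : ℝ) * s ^ t.toReal) ^ (1 / t.toReal) :=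
          Real.rpow_le_rpow (Finset.sum_nonneg fun i _ => Real.rpow_nonneg (abs_nonneg _) _)
            hsum (by positivity)
      _ = (ν : ℝ) ^ (1 / t.toReal) * s := by
          rw [Real.mul_rpow (Nat.cast_nonneg _) (Real.rpow_nonneg hs _),
            ← Real.rpow_mul hs, mul_one_div, div_self htr.ne', Real.rpow_one]

lemma abs_coord_le_nrm (x : Fin ν → ℝ) (i : Fin ν) : |x i| ≤ nrm t x := by
  rcases eq_or_ne t ∞ with rfl | ht
  · rw [nrm_top_eq]
    exact le_ciSup (f := fun j => |x j|) (Set.Finite.bddAbove (Set.finite_range _)) i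
  · have htr : 0 < t.toReal := toReal_pos_of_ne_top t ht
    rw [nrm_eq_sum t ht]
    have : |x i| = (|x i| ^ t.toReal) ^ (1 / t.toReal) := by
      rw [← Real.rpow_mul (abs_nonneg _), mul_one_div, div_self htr.ne', Real.rpow_one]
    rw [this]
    exact Real.rpow_le_rpow (Real.rpow_nonneg (abs_nonneg _) _)
      (Finset.single_le_sum (fun j _ => Real.rpow_nonneg (abs_nonneg _) _) (Finset.mem_univ i))
      (by positivity)

def Bset (t : ℝ≥0∞) [Fact (1 ≤ t)] (ν : ℕ) : Set (Fin ν → ℝ) := {x | nrm t x ≤ 1}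

lemma isClosed_ballSet (c : Fin ν → ℝ) (r : ℝ) : IsClosed {x : Fin ν → ℝ | nrm t (x - c) ≤ r} :=
  isClosed_le ((nrm_cont t).comp (continuous_id.sub continuous_const)) continuous_const

lemma measurableSet_ballSet (c : Fin ν → ℝ) (r : ℝ) :
    MeasurableSet {x : Fin ν → ℝ | nrm t (x - c) ≤ r} :=
  (isClosed_ballSet t c r).measurableSet

lemma ballSet_eq (c : Fin ν → ℝ) {r : ℝ} (hr : 0 < r) :
    {x : Fin ν → ℝ | nrm t (x - c) ≤ r} = c +ᵥ (r • Bset t ν) := by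
  ext y
  simp only [Set.mem_vadd_set_iff_neg_vadd_mem, vadd_eq_add,
    Set.mem_smul_set_iff_inv_smul_mem₀ hr.ne', Bset, Set.mem_setOf_eq, nrm_smul, abs_inv,
    abs_of_pos hr]
  rw [← sub_eq_neg_add, inv_mul_le_iff₀ hr, mul_one]

lemma volume_ballSet (c : Fin ν → ℝ) {r : ℝ} (hr : 0 < r) :
    volume {x : Fin ν → ℝ | nrm t (x - c) ≤ r}
      = ENNReal.ofReal (r ^ ν) * volume (Bset t ν) := by
  rw [ballSet_eq t c hr, measure_vadd,
    MeasureTheory.Measure.addHaar_smul_of_nonneg volume hr.le,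
    Module.finrank_fintype_fun_eq_card, Fintype.card_fin]

lemma volume_Bset_lower (hν : 1 ≤ ν) :
    ENNReal.ofReal ((2 * (ν : ℝ) ^ (-(t⁻¹).toReal)) ^ ν) ≤ volume (Bset t ν) := by
  have hνpos : (0:ℝ) < ν := by exact_mod_cast hν
  set s : ℝ := (ν : ℝ) ^ (-(t⁻¹).toReal) with hs
  have hspos : 0 < s := Real.rpow_pos_of_pos hνpos _
  have hcube : (Set.univ.pi fun _ : Fin ν => Set.Icc (-s) s) ⊆ Bset t ν := by
    intro x hx
    have hco : ∀ i, |x i| ≤ s := by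
      intro i
      have h2 := hx i (Set.mem_univ i)
      rw [Set.mem_Icc] at h2
      exact abs_le.2 h2
    have := nrm_le_of_coords t hν hspos.le x hco
    have h1 : (ν : ℝ) ^ (t⁻¹).toReal * s = 1 := by
      rw [hs, ← Real.rpow_add hνpos, add_neg_cancel, Real.rpow_zero]
    show nrm t x ≤ 1
    exact le_of_le_of_eq this h1
  calc ENNReal.ofReal ((2 * s) ^ ν)
      = volume (Set.univ.pi fun _ : Fin ν => Set.Icc (-s) s) := by
        rw [volume_pi_pi]
        simp only [Real.volume_Icc, sub_neg_eq_add]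
        rw [Finset.prod_const, Finset.card_univ, Fintype.card_fin,
          ← ENNReal.ofReal_pow (by positivity)]
        congr 1
        ring
    _ ≤ volume (Bset t ν) := measure_mono hcube

instance factOneLeOne : Fact ((1:ℝ≥0∞) ≤ 1) := ⟨le_rfl⟩

lemma volume_Bset_upper (hν : 1 ≤ ν) (ht : t ≠ ∞) :
    volume (Bset t ν)
      ≤ ENNReal.ofReal ((2 * Real.exp 1 * (ν : ℝ) ^ (-(t⁻¹).toReal)) ^ ν) := by
  haveI : Nonempty (Fin ν) := ⟨⟨0, hν⟩⟩
  have hνpos : (0:ℝ) < ν := by exact_mod_cast hν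
  set δ : ℝ := (t⁻¹).toReal with hδ
  set R : ℝ := (ν : ℝ) ^ (1 - δ) with hR
  have hR0 : 0 ≤ R := (Real.rpow_pos_of_pos hνpos _).le
  have hsub : Bset t ν ⊆ {x : Fin ν → ℝ | (∑ i, |x i| ^ (1:ℝ)) ^ (1/(1:ℝ)) ≤ R} := by
    intro x hx
    have hx1 : nrm t x ≤ 1 := hx
    have e := nrm_compare 1 t hν (by simp) Fact.out x
    have e2 : nrm 1 x ≤ R := by
      refine le_trans e ?_
      have : ((1:ℝ≥0∞)⁻¹).toReal - (t⁻¹).toReal = 1 - δ := by simp [hδ]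
      rw [this, ← hR]
      exact mul_le_of_le_one_right hR0 hx1
    have e3 : nrm 1 x = (∑ i, |x i| ^ (1:ℝ)) ^ (1/(1:ℝ)) := by
      rw [nrm_eq_sum 1 (by simp)]
      norm_num
    show (∑ i, |x i| ^ (1:ℝ)) ^ (1/(1:ℝ)) ≤ R
    rw [← e3]
    exact e2
  have hvol := MeasureTheory.volume_sum_rpow_le (Fin ν) (p := 1) le_rfl R
  have hGamma1 : Real.Gamma (1/(1:ℝ) + 1) = 1 := by
    norm_num [Real.Gamma_two]
  have hGamma2 : Real.Gamma ((Fintype.card (Fin ν) : ℝ) / 1 + 1) = (Nat.factorial ν : ℝ) := by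
    rw [div_one, Fintype.card_fin]
    exact_mod_cast Real.Gamma_nat_eq_factorial ν
  rw [hGamma1, hGamma2, Fintype.card_fin] at hvol
  have step1 : volume (Bset t ν) ≤ ENNReal.ofReal (R ^ ν * ((2*1) ^ ν / (Nat.factorial ν : ℝ))) := by
    refine le_trans (measure_mono hsub) ?_
    rw [hvol, ← ENNReal.ofReal_pow hR0, ← ENNReal.ofReal_mul (by positivity)]
  refine le_trans step1 (ENNReal.ofReal_le_ofReal ?_)
  -- real inequality
  have hfactpos : (0:ℝ) < (Nat.factorial ν : ℝ) := by positivity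
  have hfact : (ν:ℝ) ^ ν ≤ Real.exp ν * (Nat.factorial ν : ℝ) := by
    have h := Real.sum_le_exp_of_nonneg hνpos.le (ν + 1)
    have h2 : (ν:ℝ) ^ ν / (Nat.factorial ν : ℝ) ≤ Real.exp ν :=
      le_trans (Finset.single_le_sum (f := fun i => (ν:ℝ) ^ i / (Nat.factorial i : ℝ))
        (fun i _ => by positivity) (Finset.self_mem_range_succ ν)) h
    calc (ν:ℝ) ^ ν = ((ν:ℝ) ^ ν / (Nat.factorial ν : ℝ)) * (Nat.factorial ν : ℝ) := by field_simp
      _ ≤ Real.exp ν * (Nat.factorial ν : ℝ) := mul_le_mul_of_nonneg_right h2 hfactpos.le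
  have hRν : R ^ ν = (ν : ℝ) ^ (ν:ℕ) * ((ν:ℝ) ^ (-δ)) ^ ν := by
    rw [← Real.rpow_natCast R ν, hR, ← Real.rpow_mul hνpos.le,
      ← Real.rpow_natCast ((ν:ℝ) ^ (-δ)) ν, ← Real.rpow_mul hνpos.le,
      ← Real.rpow_natCast (ν:ℝ) ν, ← Real.rpow_add hνpos]
    congr 1
    ring
  rw [hRν]
  have hexp : Real.exp 1 ^ ν = Real.exp ν := by
    rw [← Real.exp_one_rpow (ν:ℝ), ← Real.rpow_natCast (Real.exp 1) ν]
  have hmono : (0:ℝ) ≤ ((ν:ℝ) ^ (-δ)) ^ ν := by positivity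
  calc (ν : ℝ) ^ (ν:ℕ) * ((ν:ℝ) ^ (-δ)) ^ ν * ((2*1) ^ ν / (Nat.factorial ν : ℝ))
      = ((ν : ℝ) ^ (ν:ℕ) * 2 ^ ν / (Nat.factorial ν : ℝ)) * ((ν:ℝ) ^ (-δ)) ^ ν := by ring
    _ ≤ (Real.exp ν * 2 ^ ν) * ((ν:ℝ) ^ (-δ)) ^ ν := by
        refine mul_le_mul_of_nonneg_right ?_ hmono
        rw [div_le_iff₀ hfactpos]
        calc (ν : ℝ) ^ (ν:ℕ) * 2 ^ ν ≤ (Real.exp ν * (Nat.factorial ν : ℝ)) * 2 ^ ν :=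
              mul_le_mul_of_nonneg_right hfact (by positivity)
          _ = Real.exp ν * 2 ^ ν * (Nat.factorial ν : ℝ) := by ring
    _ = (2 * Real.exp 1 * (ν:ℝ) ^ (-δ)) ^ ν := by rw [mul_pow, mul_pow, hexp]; ring

lemma volume_Bset_pos (hν : 1 ≤ ν) : 0 < volume (Bset t ν) := by
  refine lt_of_lt_of_le ?_ (volume_Bset_lower t hν)
  have hνpos : (0:ℝ) < ν := by exact_mod_cast hν
  exact ENNReal.ofReal_pos.2 (by positivity)

lemma volume_Bset_lt_top (hν : 1 ≤ ν) : volume (Bset t ν) < ⊤ := by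
  have hsub : Bset t ν ⊆ Set.univ.pi fun _ : Fin ν => Set.Icc (-1 : ℝ) 1 := by
    intro x hx i _
    have h1 := abs_coord_le_nrm t x i
    have h2 : nrm t x ≤ 1 := hx
    rw [Set.mem_Icc, ← abs_le]
    exact h1.trans h2
  refine lt_of_le_of_lt (measure_mono hsub) ?_
  rw [volume_pi_pi]
  simp only [Real.volume_Icc]
  rw [Finset.prod_const, Finset.card_univ, Fintype.card_fin]
  exact ENNReal.pow_lt_top ENNReal.ofReal_lt_top

lemma packing_bound (hν : 1 ≤ ν) {ε : ℝ} (hε : 0 < ε) (S : Finset (Fin ν → ℝ))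
    (hS1 : ∀ s ∈ S, nrm t s ≤ 1)
    (hsep : ∀ s ∈ S, ∀ u ∈ S, s ≠ u → ε < nrm t (s - u)) :
    (S.card : ℝ) ≤ ((2 + ε) / ε) ^ ν := by
  set V := volume (Bset t ν) with hV
  have hV0 : V ≠ 0 := (volume_Bset_pos t hν).ne'
  have hVtop : V ≠ ⊤ := (volume_Bset_lt_top t hν).ne
  set f : (Fin ν → ℝ) → Set (Fin ν → ℝ) := fun s => {x | nrm t (x - s) ≤ ε / 2} with hf
  have hdisj : (S : Set (Fin ν → ℝ)).PairwiseDisjoint f := by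
    intro a ha b hb hab
    show Disjoint (f a) (f b)
    rw [Set.disjoint_left]
    intro x hxa hxb
    have h1 : nrm t (x - a) ≤ ε / 2 := hxa
    have h2 : nrm t (x - b) ≤ ε / 2 := hxb
    have h3 : nrm t (a - b) ≤ ε := by
      have : a - b = -(x - a) + (x - b) := by ring
      rw [this]
      refine le_trans (nrm_add_le t _ _) ?_
      rw [nrm_neg]
      linarith
    exact absurd h3 (not_le.2 (hsep a ha b hb hab))
  have hmeas : ∀ s ∈ S, MeasurableSet (f s) := fun s _ => measurableSet_ballSet t s (ε / 2)
  have hsub : (⋃ s ∈ S, f s) ⊆ {x : Fin ν → ℝ | nrm t (x - 0) ≤ 1 + ε / 2} := by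
    intro x hx
    rcases Set.mem_iUnion₂.1 hx with ⟨s, hs, hxs⟩
    have h1 : nrm t (x - s) ≤ ε / 2 := hxs
    show nrm t (x - 0) ≤ 1 + ε / 2
    rw [sub_zero]
    have : x = (x - s) + s := by ring
    rw [this]
    refine le_trans (nrm_add_le t _ _) ?_
    linarith [hS1 s hs]
  have hεν : 0 < ε / 2 := by linarith
  have key : (S.card : ℝ≥0∞) * (ENNReal.ofReal ((ε / 2) ^ ν) * V)
      ≤ ENNReal.ofReal ((1 + ε / 2) ^ ν) * V := by
    calc (S.card : ℝ≥0∞) * (ENNReal.ofReal ((ε / 2) ^ ν) * V)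
        = ∑ s ∈ S, (ENNReal.ofReal ((ε / 2) ^ ν) * V) := by
          rw [Finset.sum_const, nsmul_eq_mul]
      _ = ∑ s ∈ S, volume (f s) := by
          refine Finset.sum_congr rfl fun s _ => ?_
          rw [hf]
          exact (volume_ballSet t s hεν).symm
      _ = volume (⋃ s ∈ S, f s) := (measure_biUnion_finset hdisj hmeas).symm
      _ ≤ volume {x : Fin ν → ℝ | nrm t (x - 0) ≤ 1 + ε / 2} := measure_mono hsub
      _ = ENNReal.ofReal ((1 + ε / 2) ^ ν) * V := volume_ballSet t 0 (by linarith)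
  rw [← mul_assoc] at key
  have key2 : (S.card : ℝ≥0∞) * ENNReal.ofReal ((ε / 2) ^ ν)
      ≤ ENNReal.ofReal ((1 + ε / 2) ^ ν) :=
    (ENNReal.mul_le_mul_iff_left hV0 hVtop).1 key
  have key3 : (S.card : ℝ) * (ε / 2) ^ ν ≤ (1 + ε / 2) ^ ν := by
    rw [← ENNReal.ofReal_natCast S.card, ← ENNReal.ofReal_mul (Nat.cast_nonneg _)] at key2
    exact (ENNReal.ofReal_le_ofReal_iff (by positivity)).1 key2
  have hfrac : ((2 + ε) / ε) ^ ν = (1 + ε / 2) ^ ν / (ε / 2) ^ ν := by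
    rw [← div_pow]
    congr 1
    field_simp
  rw [hfrac, le_div_iff₀ (by positivity)]
  exact key3

lemma nrm_zero : nrm t (0 : Fin ν → ℝ) = 0 := norm_zero

lemma exists_cover (hν : 1 ≤ ν) {ε : ℝ} (hε : 0 < ε) :
    ∃ S : Finset (Fin ν → ℝ), (S.card : ℝ) ≤ ((2 + ε) / ε) ^ ν ∧
      ∀ x : Fin ν → ℝ, nrm t x ≤ 1 → ∃ s ∈ S, nrm t (x - s) ≤ ε := by
  classical
  set M := Nat.ceil (((2 + ε) / ε) ^ ν) with hM
  set P : ℕ → Prop := fun n => ∃ S : Finset (Fin ν → ℝ),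
    (∀ s ∈ S, nrm t s ≤ 1) ∧ (∀ s ∈ S, ∀ u ∈ S, s ≠ u → ε < nrm t (s - u)) ∧ S.card = n
    with hP
  have hPbound : ∀ n, P n → n ≤ M := by
    rintro n ⟨S, h1, h2, h3⟩
    have hb := packing_bound t hν hε S h1 h2
    rw [h3] at hb
    have : (n : ℝ) ≤ (M : ℝ) := hb.trans (Nat.le_ceil _)
    exact_mod_cast this
  have hP0 : P 0 := ⟨∅, by simp, by simp, rfl⟩
  set n0 := Nat.findGreatest P M with hn0
  have hPn0 : P n0 := Nat.findGreatest_spec (Nat.zero_le M) hP0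
  obtain ⟨S, hS1, hS2, hScard⟩ := hPn0
  refine ⟨S, packing_bound t hν hε S hS1 hS2, ?_⟩
  intro x hx
  by_contra hcon
  push_neg at hcon
  have hxS : x ∉ S := by
    intro hxS
    have := hcon x hxS
    rw [sub_self, nrm_zero] at this
    exact absurd hε.le (not_le.2 this)
  have hP' : P (n0 + 1) := by
    refine ⟨insert x S, ?_, ?_, ?_⟩
    · intro s hs
      rcases Finset.mem_insert.1 hs with rfl | hs
      · exact hx
      · exact hS1 s hs
    · intro s hs u hu hsu
      rcases Finset.mem_insert.1 hs with hs' | hs <;> rcases Finset.mem_insert.1 hu with hu' | hu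
      · exact absurd (hs'.trans hu'.symm) hsu
      · rw [hs']
        exact hcon u hu
      · rw [hu', show s - x = -(x - s) by ring, nrm_neg]
        exact hcon s hs
      · exact hS2 s hs u hu hsu
    · rw [Finset.card_insert_of_notMem hxS, hScard]
  have h1 : n0 + 1 ≤ M := hPbound _ hP'
  have h2 : n0 + 1 ≤ n0 := Nat.le_findGreatest h1 hP'
  omega

lemma cover_fin (hν : 1 ≤ ν) {k : ℕ} (hk : 1 ≤ k) :
    ∃ c : Fin (2 ^ (k - 1)) → (Fin ν → ℝ),
      ∀ x : Fin ν → ℝ, nrm t x ≤ 1 →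
        ∃ i, nrm t (x - c i) ≤ 8 * 2 ^ (-(k:ℝ)/(ν:ℝ)) := by
  have hνpos : (0:ℝ) < ν := by exact_mod_cast hν
  have hpow : 0 < 2 ^ (k - 1) := Nat.pow_pos (by norm_num)
  set ε : ℝ := 8 * (2:ℝ) ^ (-(k:ℝ)/(ν:ℝ)) with hε
  have hεpos : 0 < ε := by
    rw [hε]
    positivity
  by_cases h1 : 1 ≤ ε
  · refine ⟨fun _ => 0, fun x hx => ⟨⟨0, hpow⟩, ?_⟩⟩
    rw [sub_zero]
    exact hx.trans h1
  · push_neg at h1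
    obtain ⟨S, hcard, hcov⟩ := exists_cover t hν hεpos
    have hb : (S.card : ℝ) ≤ (2:ℝ) ^ (k - 1) := by
      refine hcard.trans ?_
      have h2 : ((2 + ε) / ε) ^ ν ≤ (3 / ε) ^ ν := by
        apply pow_le_pow_left₀ (by positivity)
        exact (div_le_div_iff_of_pos_right hεpos).2 (by linarith)
      refine h2.trans ?_
      have h3 : (3 / ε) = (3 / 8) * (2:ℝ) ^ ((k:ℝ)/(ν:ℝ)) := by
        rw [hε, neg_div, Real.rpow_neg (by norm_num)]
        field_simp
      have h4 : ((2:ℝ) ^ ((k:ℝ)/(ν:ℝ))) ^ ν = 2 ^ k := by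
        rw [← Real.rpow_natCast ((2:ℝ) ^ ((k:ℝ)/(ν:ℝ))) ν, ← Real.rpow_mul (by norm_num),
          div_mul_cancel₀ _ hνpos.ne', Real.rpow_natCast]
      have h5 : ((3:ℝ) / 8) ^ ν ≤ 1 / 2 := by
        refine le_trans (pow_le_pow_of_le_one (by norm_num) (by norm_num) hν) ?_
        norm_num
      calc (3 / ε) ^ ν = (3 / 8) ^ ν * 2 ^ k := by rw [h3, mul_pow, h4]
        _ ≤ (1 / 2) * 2 ^ k := mul_le_mul_of_nonneg_right h5 (by positivity)
        _ = (2:ℝ) ^ (k - 1) := by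
            have hkk : k = (k - 1) + 1 := (Nat.succ_pred_eq_of_pos hk).symm
            have h2k : (2:ℝ) ^ k = 2 * 2 ^ (k - 1) := by
              conv_lhs => rw [hkk]
              rw [pow_succ]
              ring
            rw [h2k]
            ring
    have hcard' : S.card ≤ 2 ^ (k - 1) := by
      have : ((2:ℝ) ^ (k - 1)) = ((2 ^ (k - 1) : ℕ) : ℝ) := by push_cast; ring
      rw [this] at hb
      exact_mod_cast hb
    refine ⟨fun i => S.toList.getD i 0, fun x hx => ?_⟩
    obtain ⟨s, hsS, hs⟩ := hcov x hx
    have hmem : s ∈ S.toList := Finset.mem_toList.2 hsS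
    obtain ⟨n, hn, hget⟩ := List.mem_iff_getElem.1 hmem
    have hlen : S.toList.length = S.card := Finset.length_toList S
    have hn2 : n < 2 ^ (k - 1) := lt_of_lt_of_le (hlen ▸ hn) hcard'
    refine ⟨⟨n, hn2⟩, ?_⟩
    have hgd : S.toList.getD n 0 = s := by
      rw [List.getD_eq_getElem S.toList 0 hn, hget]
    show nrm t (x - S.toList.getD n 0) ≤ ε
    rw [hgd]
    exact hs

/-- Schütt's theorem, case `1 ≤ q < p ≤ ∞`:
`e_k(I_ν : l_p^ν → l_q^ν) ≍ 2^{-k/ν} ν^{1/q - 1/p}` for all `k ∈ ℕ`,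
with constants depending only on `p, q`. -/
theorem entropy_id_lp_lq_q_lt_p (p q : ℝ≥0∞) [Fact (1 ≤ p)] [Fact (1 ≤ q)]
    (hq : 1 ≤ q) (hqp : q < p) :
    ∃ c : ℝ, 0 < c ∧ ∀ ν : ℕ, 1 ≤ ν → ∀ k : ℕ, 1 ≤ k →
      c⁻¹ * ((2 : ℝ) ^ (-(k : ℝ) / (ν : ℝ)) * (ν : ℝ) ^ ((q⁻¹).toReal - (p⁻¹).toReal))
          ≤ entropyNumber k (idLp p q ν) ∧
      entropyNumber k (idLp p q ν)
          ≤ c * ((2 : ℝ) ^ (-(k : ℝ) / (ν : ℝ)) * (ν : ℝ) ^ ((q⁻¹).toReal - (p⁻¹).toReal)) := by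
  have hqtop : q ≠ ∞ := ne_top_of_lt hqp
  have hexp1 : (1:ℝ) ≤ Real.exp 1 := by linarith [Real.add_one_le_exp 1]
  refine ⟨8 * Real.exp 1, by positivity, ?_⟩
  intro ν hν k hk
  haveI : Nonempty (Fin ν) := ⟨⟨0, hν⟩⟩
  have hpow : 0 < 2 ^ (k - 1) := Nat.pow_pos (by norm_num)
  have hνpos : (0:ℝ) < ν := by exact_mod_cast hν
  have hν1 : (1:ℝ) ≤ ν := by exact_mod_cast hν
  set a : ℝ := (p⁻¹).toReal with ha
  set b : ℝ := (q⁻¹).toReal with hb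
  have hq0 : q ≠ 0 := by
    intro h
    rw [h] at hq
    simp at hq
  have hab : a ≤ b := by
    rw [ha, hb]
    exact ENNReal.toReal_mono (ENNReal.inv_ne_top.2 hq0) (ENNReal.inv_le_inv.2 hqp.le)
  have hδ0 : 0 ≤ b - a := sub_nonneg.2 hab
  have hνδ : (1:ℝ) ≤ (ν:ℝ) ^ (b - a) := Real.one_le_rpow hν1 hδ0
  have hD0 : (0:ℝ) < (2:ℝ) ^ (-(k:ℝ)/(ν:ℝ)) * (ν:ℝ) ^ (b - a) := by positivity
  -- the entropy set
  set SS : Set ℝ := {ε : ℝ | 0 < ε ∧ ∃ c : Fin (2 ^ (k - 1)) → PiLp q (fun _ : Fin ν => ℝ),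
    ∀ x : PiLp p (fun _ : Fin ν => ℝ), ‖x‖ ≤ 1 → ∃ i, ‖idLp p q ν x - c i‖ ≤ ε} with hSS
  have hEN : entropyNumber k (idLp p q ν) = sInf SS := rfl
  -- upper bound: covering transfer
  obtain ⟨c0, hc0⟩ := cover_fin p hν hk
  set ε8 : ℝ := 8 * (2:ℝ) ^ (-(k:ℝ)/(ν:ℝ)) with hε8
  have hε8pos : 0 < ε8 := by positivity
  have hmem : ((ν:ℝ) ^ (b - a) * ε8) ∈ SS := by
    refine ⟨by positivity, fun i => (WithLp.equiv q (Fin ν → ℝ)).symm (c0 i), fun x hx => ?_⟩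
    have hx' : nrm p ((WithLp.equiv p (Fin ν → ℝ)) x) ≤ 1 := hx
    obtain ⟨i, hi⟩ := hc0 _ hx'
    refine ⟨i, ?_⟩
    show nrm q ((WithLp.equiv p (Fin ν → ℝ)) x - c0 i) ≤ (ν:ℝ) ^ (b - a) * ε8
    calc nrm q ((WithLp.equiv p (Fin ν → ℝ)) x - c0 i)
        ≤ (ν:ℝ) ^ ((q⁻¹).toReal - (p⁻¹).toReal)
            * nrm p ((WithLp.equiv p (Fin ν → ℝ)) x - c0 i) :=
          nrm_compare q p hν hqtop hqp.le _
      _ ≤ (ν:ℝ) ^ (b - a) * ε8 := by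
          rw [← ha, ← hb]
          exact mul_le_mul_of_nonneg_left hi (by positivity)
  have hbdd : BddBelow SS := ⟨0, fun ε hε => hε.1.le⟩
  have hupper : entropyNumber k (idLp p q ν) ≤ (ν:ℝ) ^ (b - a) * ε8 := by
    rw [hEN]
    exact csInf_le hbdd hmem
  -- lower bound
  have hlow : ∀ ε ∈ SS, (8 * Real.exp 1)⁻¹ * ((2:ℝ) ^ (-(k:ℝ)/(ν:ℝ)) * (ν:ℝ) ^ (b - a)) ≤ ε := by
    rintro ε ⟨hεpos, d, hd⟩
    have hcov : Bset p ν ⊆ ⋃ i : Fin (2 ^ (k - 1)),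
        {x : Fin ν → ℝ | nrm q (x - (WithLp.equiv q (Fin ν → ℝ)) (d i)) ≤ ε} := by
      intro x hx
      obtain ⟨i, hi⟩ := hd ((WithLp.equiv p (Fin ν → ℝ)).symm x) hx
      exact Set.mem_iUnion.2 ⟨i, hi⟩
    have hvol1 : volume (Bset p ν)
        ≤ (2 ^ (k - 1) : ℕ) * (ENNReal.ofReal (ε ^ ν) * volume (Bset q ν)) := by
      refine le_trans (measure_mono hcov) ?_
      refine le_trans (measure_iUnion_fintype_le volume _) ?_
      have heach : ∀ i : Fin (2 ^ (k - 1)),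
          volume {x : Fin ν → ℝ | nrm q (x - (WithLp.equiv q (Fin ν → ℝ)) (d i)) ≤ ε}
            = ENNReal.ofReal (ε ^ ν) * volume (Bset q ν) :=
        fun i => volume_ballSet q _ hεpos
      rw [Finset.sum_congr rfl fun i _ => heach i, Finset.sum_const, Finset.card_univ,
        Fintype.card_fin, nsmul_eq_mul]
    have hA := volume_Bset_lower p hν
    have hC := volume_Bset_upper q hν hqtop
    have h2 : ENNReal.ofReal ((2 * (ν:ℝ) ^ (-a)) ^ ν)
        ≤ (2 ^ (k - 1) : ℕ) * (ENNReal.ofReal (ε ^ ν)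
            * ENNReal.ofReal ((2 * Real.exp 1 * (ν:ℝ) ^ (-b)) ^ ν)) := by
      refine le_trans hA (le_trans hvol1 ?_)
      exact mul_le_mul_right (mul_le_mul_right hC _) _
    have hreal : (2 * (ν:ℝ) ^ (-a)) ^ ν
        ≤ ((2 ^ (k - 1) : ℕ) : ℝ) * (ε ^ ν * (2 * Real.exp 1 * (ν:ℝ) ^ (-b)) ^ ν) := by
      rw [← ENNReal.ofReal_natCast (2 ^ (k - 1)), ← ENNReal.ofReal_mul (by positivity),
        ← ENNReal.ofReal_mul (by positivity)] at h2
      exact (ENNReal.ofReal_le_ofReal_iff (by positivity)).1 h2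
    set m : ℝ := (8 * Real.exp 1)⁻¹ * ((2:ℝ) ^ (-(k:ℝ)/(ν:ℝ)) * (ν:ℝ) ^ (b - a)) with hm
    have hm0 : 0 ≤ m := by positivity
    have hν0 : ν ≠ 0 := by omega
    suffices hmν : m ^ ν ≤ ε ^ ν by
      exact (pow_le_pow_iff_left₀ hm0 hεpos.le hν0).1 hmν
    set C : ℝ := (2 * Real.exp 1 * (ν:ℝ) ^ (-b)) ^ ν with hCdef
    set N : ℝ := ((2 ^ (k - 1) : ℕ) : ℝ) with hNdef
    have hNpos : 0 < N := by
      rw [hNdef]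
      positivity
    have hCpos : 0 < C := by
      rw [hCdef]
      positivity
    have hNC : (0:ℝ) < N * C := by positivity
    have hN2 : N = (2:ℝ) ^ (k - 1 : ℕ) := by
      rw [hNdef]
      push_cast
      ring
    have em : m ^ ν = ((8 * Real.exp 1)⁻¹) ^ ν
        * ((2:ℝ) ^ (-(k:ℝ)) * (ν:ℝ) ^ ((b - a) * (ν:ℝ))) := by
      rw [hm, mul_pow, mul_pow, ← Real.rpow_natCast ((2:ℝ) ^ (-(k:ℝ)/(ν:ℝ))) ν,
        ← Real.rpow_mul (by norm_num : (0:ℝ) ≤ 2), div_mul_cancel₀ _ hνpos.ne',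
        ← Real.rpow_natCast ((ν:ℝ) ^ (b - a)) ν, ← Real.rpow_mul hνpos.le]
    have eC : C = 2 ^ ν * Real.exp 1 ^ ν * (ν:ℝ) ^ (-(b * (ν:ℝ))) := by
      rw [hCdef, mul_pow, mul_pow, ← Real.rpow_natCast ((ν:ℝ) ^ (-b)) ν,
        ← Real.rpow_mul hνpos.le, neg_mul]
    have eA : (2 * (ν:ℝ) ^ (-a)) ^ ν = 2 ^ ν * (ν:ℝ) ^ (-(a * (ν:ℝ))) := by
      rw [mul_pow, ← Real.rpow_natCast ((ν:ℝ) ^ (-a)) ν, ← Real.rpow_mul hνpos.le, neg_mul]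
    have eN : (2:ℝ) ^ (k - 1 : ℕ) * (2:ℝ) ^ (-(k:ℝ)) = 2⁻¹ := by
      rw [← Real.rpow_natCast 2 (k - 1), ← Real.rpow_add (by norm_num : (0:ℝ) < 2)]
      have : ((k - 1 : ℕ) : ℝ) + (-(k:ℝ)) = -1 := by
        push_cast [Nat.cast_sub hk]
        ring
      rw [this, Real.rpow_neg_one]
    have eδ : (ν:ℝ) ^ ((b - a) * (ν:ℝ)) * (ν:ℝ) ^ (-(b * (ν:ℝ))) = (ν:ℝ) ^ (-(a * (ν:ℝ))) := by
      rw [← Real.rpow_add hνpos]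
      congr 1
      ring
    have e8 : ((8 * Real.exp 1)⁻¹) ^ ν * Real.exp 1 ^ ν ≤ 1 := by
      rw [← mul_pow]
      have hR : (8 * Real.exp 1)⁻¹ * Real.exp 1 = 8⁻¹ := by
        field_simp
      rw [hR]
      exact pow_le_one₀ (by norm_num) (by norm_num)
    have hT : m ^ ν * (N * C) ≤ (2 * (ν:ℝ) ^ (-a)) ^ ν := by
      calc m ^ ν * (N * C)
          = (((8 * Real.exp 1)⁻¹) ^ ν * Real.exp 1 ^ ν)
              * ((2:ℝ) ^ (k - 1 : ℕ) * (2:ℝ) ^ (-(k:ℝ))) * 2 ^ ν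
              * ((ν:ℝ) ^ ((b - a) * (ν:ℝ)) * (ν:ℝ) ^ (-(b * (ν:ℝ)))) := by
            rw [em, eC, hN2]
            ring
        _ = (((8 * Real.exp 1)⁻¹) ^ ν * Real.exp 1 ^ ν) * 2⁻¹ * 2 ^ ν
              * (ν:ℝ) ^ (-(a * (ν:ℝ))) := by rw [eN, eδ]
        _ ≤ 1 * 2⁻¹ * 2 ^ ν * (ν:ℝ) ^ (-(a * (ν:ℝ))) := by
            have hpos : (0:ℝ) ≤ 2⁻¹ * 2 ^ ν * (ν:ℝ) ^ (-(a * (ν:ℝ))) := by positivity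
            calc (((8 * Real.exp 1)⁻¹) ^ ν * Real.exp 1 ^ ν) * 2⁻¹ * 2 ^ ν
                  * (ν:ℝ) ^ (-(a * (ν:ℝ)))
                = (((8 * Real.exp 1)⁻¹) ^ ν * Real.exp 1 ^ ν)
                    * (2⁻¹ * 2 ^ ν * (ν:ℝ) ^ (-(a * (ν:ℝ)))) := by ring
              _ ≤ 1 * (2⁻¹ * 2 ^ ν * (ν:ℝ) ^ (-(a * (ν:ℝ)))) :=
                  mul_le_mul_of_nonneg_right e8 hpos
              _ = 1 * 2⁻¹ * 2 ^ ν * (ν:ℝ) ^ (-(a * (ν:ℝ))) := by ring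
        _ ≤ 2 ^ ν * (ν:ℝ) ^ (-(a * (ν:ℝ))) := by
            rw [one_mul]
            have hpos : (0:ℝ) ≤ 2 ^ ν * (ν:ℝ) ^ (-(a * (ν:ℝ))) := by positivity
            calc 2⁻¹ * 2 ^ ν * (ν:ℝ) ^ (-(a * (ν:ℝ)))
                = (2 ^ ν * (ν:ℝ) ^ (-(a * (ν:ℝ)))) / 2 := by ring
              _ ≤ 2 ^ ν * (ν:ℝ) ^ (-(a * (ν:ℝ))) := half_le_self hpos
        _ = (2 * (ν:ℝ) ^ (-a)) ^ ν := eA.symm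
    have hfin : m ^ ν * (N * C) ≤ ε ^ ν * (N * C) := by
      refine hT.trans ?_
      calc (2 * (ν:ℝ) ^ (-a)) ^ ν ≤ N * (ε ^ ν * C) := hreal
        _ = ε ^ ν * (N * C) := by ring
    exact le_of_mul_le_mul_right hfin hNC
  constructor
  · rw [hEN]
    exact le_csInf ⟨_, hmem⟩ hlow
  · refine hupper.trans ?_
    have : (ν:ℝ) ^ (b - a) * ε8 = 8 * ((2:ℝ) ^ (-(k:ℝ)/(ν:ℝ)) * (ν:ℝ) ^ (b - a)) := by
      rw [hε8]
      ring
    rw [this]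
    exact mul_le_mul_of_nonneg_right (by nlinarith) hD0.le
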